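/- Let Ω and Λ_r be closed subsets of a finite-dimensional normed space with Γ_r = Ω ∩ Λ_r nonempty. If the mapping F_r(X,Y) = {X − Y} for (X,Y) ∈ Ω × Λ_r (and ∅ otherwise) is metrically subregular at (X̄, X̄) for the origin with constant κ and radius ε, then for every X ∈ B(X̄, ε/4) one has dist(X, Γ_r) ≤ (1 + κ)·[dist(X, Ω) + dist(X, Λ_r)]. -/
import Mathlib


/-- if `F_r(X,Y) = {X − Y}` on `Ω × Λ` is metrically subregular at
`(X̄, X̄)` for the origin with constant `κ` and radius `ε`, then for every
`X ∈ B(X̄, ε/4)` one has `dist(X, Ω ∩ Λ) ≤ (1 + κ)(dist(X, Ω) + dist(X, Λ))`. -/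
theorem stmt4 {E : Type*} [NormedAddCommGroup E] [NormedSpace ℝ E] [FiniteDimensional ℝ E]
    (Ω Λ : Set E) (hΩ : IsClosed Ω) (hΛ : IsClosed Λ) (hne : (Ω ∩ Λ).Nonempty)
    (Xbar : E) (hXbar : Xbar ∈ Ω ∩ Λ) (κ ε : ℝ) (hκ : 0 ≤ κ) (hε : 0 < ε)
    (hsub : ∀ X Y : E, X ∈ Ω → Y ∈ Λ → dist (X, Y) (Xbar, Xbar) ≤ ε →
      Metric.infDist (X, Y) {p : E × E | p.1 ∈ Ω ∧ p.2 ∈ Λ ∧ p.1 = p.2} ≤ κ * dist X Y) :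
    ∀ X ∈ Metric.closedBall Xbar (ε / 4),
      Metric.infDist X (Ω ∩ Λ) ≤ (1 + κ) * (Metric.infDist X Ω + Metric.infDist X Λ) := by
  intro X hX
  rw [Metric.mem_closedBall] at hX
  obtain ⟨P, hPΩ, hPd⟩ := hΩ.exists_infDist_eq_dist ⟨Xbar, hXbar.1⟩ X
  obtain ⟨Q, hQΛ, hQd⟩ := hΛ.exists_infDist_eq_dist ⟨Xbar, hXbar.2⟩ X
  have hdΩ : 0 ≤ Metric.infDist X Ω := Metric.infDist_nonneg
  have hdΛ : 0 ≤ Metric.infDist X Λ := Metric.infDist_nonneg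
  have hPX : dist X P = Metric.infDist X Ω := hPd.symm
  have hQX : dist X Q = Metric.infDist X Λ := hQd.symm
  have hPle : dist X P ≤ ε / 4 := by
    rw [hPX]; exact le_trans (Metric.infDist_le_dist_of_mem hXbar.1) hX
  have hQle : dist X Q ≤ ε / 4 := by
    rw [hQX]; exact le_trans (Metric.infDist_le_dist_of_mem hXbar.2) hX
  have hball : dist (P, Q) (Xbar, Xbar) ≤ ε := by
    rw [Prod.dist_eq]
    have h1 : dist P Xbar ≤ ε / 2 := by
      calc dist P Xbar ≤ dist P X + dist X Xbar := dist_triangle _ _ _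
        _ ≤ ε / 4 + ε / 4 := add_le_add (by rwa [dist_comm]) hX
        _ = ε / 2 := by ring
    have h2 : dist Q Xbar ≤ ε / 2 := by
      calc dist Q Xbar ≤ dist Q X + dist X Xbar := dist_triangle _ _ _
        _ ≤ ε / 4 + ε / 4 := add_le_add (by rwa [dist_comm]) hX
        _ = ε / 2 := by ring
    exact le_trans (max_le h1 h2) (by linarith)
  have hsub' := hsub P Q hPΩ hQΛ hball
  have hPQ : dist P Q ≤ Metric.infDist X Ω + Metric.infDist X Λ := by
    calc dist P Q ≤ dist P X + dist X Q := dist_triangle _ _ _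
      _ = Metric.infDist X Ω + Metric.infDist X Λ := by rw [dist_comm P X, hPX, hQX]
  -- Main bound: infDist X (Ω ∩ Λ) ≤ dist X P + infDist (P,Q) S
  have key : Metric.infDist X (Ω ∩ Λ) ≤
      Metric.infDist X Ω + Metric.infDist (P, Q)
        {p : E × E | p.1 ∈ Ω ∧ p.2 ∈ Λ ∧ p.1 = p.2} := by
    refine le_of_forall_pos_le_add fun δ hδ => ?_
    have hSne : ((Xbar, Xbar) : E × E) ∈ {p : E × E | p.1 ∈ Ω ∧ p.2 ∈ Λ ∧ p.1 = p.2} :=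
      ⟨hXbar.1, hXbar.2, rfl⟩
    obtain ⟨p, hpS, hpd⟩ := (Metric.infDist_lt_iff ⟨_, hSne⟩).mp
      (lt_add_of_pos_right _ hδ)
    obtain ⟨hp1, hp2, hp12⟩ := hpS
    have hmem : p.1 ∈ Ω ∩ Λ := ⟨hp1, hp12 ▸ hp2⟩
    calc Metric.infDist X (Ω ∩ Λ) ≤ dist X p.1 := Metric.infDist_le_dist_of_mem hmem
      _ ≤ dist X P + dist P p.1 := dist_triangle _ _ _
      _ ≤ dist X P + dist (P, Q) p := by
          gcongr
          rw [Prod.dist_eq]; exact le_max_left _ _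
      _ ≤ Metric.infDist X Ω + (Metric.infDist (P, Q) _ + δ) := by
          rw [hPX]; gcongr
      _ = Metric.infDist X Ω + Metric.infDist (P, Q) _ + δ := by ring
  calc Metric.infDist X (Ω ∩ Λ)
      ≤ Metric.infDist X Ω + Metric.infDist (P, Q)
        {p : E × E | p.1 ∈ Ω ∧ p.2 ∈ Λ ∧ p.1 = p.2} := key
    _ ≤ Metric.infDist X Ω + κ * dist P Q := by gcongr
    _ ≤ Metric.infDist X Ω + κ * (Metric.infDist X Ω + Metric.infDist X Λ) := by gcongr
    _ ≤ (1 + κ) * (Metric.infDist X Ω + Metric.infDist X Λ) := by nlinarith
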